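/- The complement of the set of fibbinary numbers in the positive integers equals the disjoint union over k ≥ 1 of the sets Φ_k = { 2^r · (q + (2k-1) · 2^{L(q)}) : r ≥ 0, q an odd fibbinary number }, where L(q) is the number of binary digits of q. -/

import Mathlib

/-- A natural number is fibbinary if its binary representation has no two consecutive 1 bits. -/
def Fibbinary (m : ℕ) : Prop := ∀ i : ℕ, ¬(m.testBit i ∧ m.testBit (i + 1))

/-- For `k ≥ 1`, `Φ_k = { 2^r·(q + (2k-1)·2^{L(q)}) : r ≥ 0, q odd fibbinary }`. -/
def Phi (k : ℕ) : Set ℕ :=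
  {m : ℕ | ∃ r q : ℕ, Odd q ∧ Fibbinary q ∧
    m = 2 ^ r * (q + (2 * k - 1) * 2 ^ Nat.size q)}

/-- Bits of `q + t * 2^s` for `q < 2^s`. -/
lemma testBit_add_mul_pow {q : ℕ} (t s i : ℕ) (hq : q < 2 ^ s) :
    (q + t * 2 ^ s).testBit i = if i < s then q.testBit i else t.testBit (i - s) := by
  rcases lt_or_ge i s with h | h
  · simp only [h, if_true]
    rw [Nat.testBit_eq_decide_div_mod_eq, Nat.testBit_eq_decide_div_mod_eq]
    have hpow : 2 ^ s = 2 ^ (s - i) * 2 ^ i := by rw [← pow_add]; congr 1; omega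
    have hdiv : (q + t * 2 ^ s) / 2 ^ i = q / 2 ^ i + t * 2 ^ (s - i) := by
      rw [hpow, ← mul_assoc, Nat.add_mul_div_right _ _ (Nat.two_pow_pos i)]
    rw [hdiv]
    have h2 : t * 2 ^ (s - i) = t * 2 ^ (s - i - 1) * 2 := by
      rw [mul_assoc, ← pow_succ]; congr 2; omega
    rw [h2, Nat.add_mul_mod_self_right]
  · simp only [Nat.not_lt.mpr h, if_false]
    rw [Nat.testBit_eq_decide_div_mod_eq, Nat.testBit_eq_decide_div_mod_eq]
    have hpow : 2 ^ i = 2 ^ s * 2 ^ (i - s) := by rw [← pow_add]; congr 1; omega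
    have hdiv : (q + t * 2 ^ s) / 2 ^ i = t / 2 ^ (i - s) := by
      rw [hpow, ← Nat.div_div_eq_div_mul, Nat.add_mul_div_right _ _ (Nat.two_pow_pos s),
        Nat.div_eq_of_lt hq, Nat.zero_add]
    rw [hdiv]

/-- The top bit of a nonzero number is set. -/
lemma testBit_size_sub_one {q : ℕ} (hq : q ≠ 0) : q.testBit (q.size - 1) = true := by
  have hs : 0 < q.size := Nat.size_pos.mpr (Nat.pos_of_ne_zero hq)
  have h1 : 2 ^ (q.size - 1) ≤ q := Nat.lt_size.mp (by omega)
  have h2 : q < 2 ^ q.size := Nat.lt_size_self q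
  have hdiv : q / 2 ^ (q.size - 1) = 1 := by
    have hlt : q / 2 ^ (q.size - 1) < 2 := by
      rw [Nat.div_lt_iff_lt_mul (Nat.two_pow_pos _)]
      calc q < 2 ^ q.size := h2
        _ = 2 * 2 ^ (q.size - 1) := by rw [← pow_succ']; congr 1; omega
    have hge : 1 ≤ q / 2 ^ (q.size - 1) :=
      Nat.one_le_div_iff (Nat.two_pow_pos _) |>.mpr h1
    omega
  rw [Nat.testBit_eq_decide_div_mod_eq, hdiv]
  simp

lemma odd_testBit_zero {n : ℕ} (hn : Odd n) : n.testBit 0 = true := by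
  rw [Nat.testBit_eq_decide_div_mod_eq]
  simp [Nat.odd_iff.mp hn]

/-- Elements of `Phi k` for `k ≥ 1`: inner structure. -/
lemma phi_elem_structure {k q : ℕ} (hk : 1 ≤ k) (hq : Odd q) (hfib : Fibbinary q)
    {n : ℕ} (hn : n = q + (2 * k - 1) * 2 ^ q.size) :
    Odd n ∧ (∀ i, i + 1 < q.size → ¬(n.testBit i ∧ n.testBit (i + 1))) ∧
      n.testBit (q.size - 1) = true ∧ n.testBit q.size = true := by
  have hq0 : q ≠ 0 := by rintro rfl; simp [Nat.odd_iff] at hq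
  have hs : 0 < q.size := Nat.size_pos.mpr (Nat.pos_of_ne_zero hq0)
  have hqlt : q < 2 ^ q.size := Nat.lt_size_self q
  have ht : Odd (2 * k - 1) := by rw [Nat.odd_iff]; omega
  have hbit : ∀ i, n.testBit i =
      if i < q.size then q.testBit i else (2 * k - 1).testBit (i - q.size) := by
    intro i; rw [hn]; exact testBit_add_mul_pow _ _ _ hqlt
  refine ⟨?_, ?_, ?_, ?_⟩
  · have h0 : n.testBit 0 = true := by
      rw [hbit 0, if_pos hs]; exact odd_testBit_zero hq
    rw [Nat.testBit_eq_decide_div_mod_eq] at h0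
    simp only [pow_zero, Nat.div_one, decide_eq_true_eq] at h0
    rw [Nat.odd_iff]; exact h0
  · intro i hi
    rw [hbit i, hbit (i + 1), if_pos (by omega), if_pos hi]
    exact hfib i
  · rw [hbit, if_pos (by omega)]; exact testBit_size_sub_one hq0
  · rw [hbit, if_neg (by omega), Nat.sub_self]; exact odd_testBit_zero ht

theorem nonfibbinary_partition :
    {m : ℕ | 0 < m ∧ ¬ Fibbinary m} = ⋃ k ∈ Set.Ici 1, Phi k ∧
    ∀ k₁ ∈ Set.Ici 1, ∀ k₂ ∈ Set.Ici 1, k₁ ≠ k₂ → Disjoint (Phi k₁) (Phi k₂) := by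
  constructor
  · -- the set equality
    ext m
    simp only [Set.mem_setOf_eq, Set.mem_iUnion, Set.mem_Ici, exists_prop]
    constructor
    · rintro ⟨hm0, hm⟩
      obtain ⟨r, n, hodd, hmn⟩ := Nat.exists_eq_two_pow_mul_odd hm0.ne'
      subst hmn
      -- transfer the non-fibbinary property to n
      have hshift : ∀ i, (2 ^ r * n).testBit i =
          if i < r then false else n.testBit (i - r) := by
        intro i
        have := testBit_add_mul_pow (q := 0) n r i (Nat.two_pow_pos r)
        simpa [mul_comm] using this
      have hnfib : ¬ Fibbinary n := by
        intro hfib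
        apply hm
        intro i ⟨h1, h2⟩
        rw [hshift] at h1 h2
        by_cases hir : i < r
        · rw [if_pos hir] at h1; exact absurd h1 (by simp)
        · rw [if_neg hir] at h1
          rw [if_neg (by omega)] at h2
          exact hfib (i - r) ⟨h1, by rw [show i + 1 - r = (i - r) + 1 by omega] at h2; exact h2⟩
      -- find minimal violation
      have hex : ∃ j, n.testBit j ∧ n.testBit (j + 1) := by
        by_contra h; push_neg at h
        exact hnfib fun i ⟨h1, h2⟩ => absurd h2 (h i h1)
      classical
      let j := Nat.find hex
      obtain ⟨hj1, hj2⟩ : n.testBit j ∧ n.testBit (j + 1) := Nat.find_spec hex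
      have hjmin : ∀ i < j, ¬(n.testBit i ∧ n.testBit (i + 1)) := fun i hi => Nat.find_min hex hi
      set s := j + 1 with hsdef
      set q := n % 2 ^ s with hqdef
      set t := n / 2 ^ s with htdef
      have hqbit : ∀ i, q.testBit i = (decide (i < s) && n.testBit i) :=
        fun i => Nat.testBit_mod_two_pow n s i
      have hqodd : Odd q := by
        have h0 : q.testBit 0 = true := by
          rw [hqbit]; simp only [decide_eq_true_eq, Bool.and_eq_true]
          exact ⟨by omega, odd_testBit_zero hodd⟩
        rw [Nat.testBit_eq_decide_div_mod_eq] at h0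
        simp only [pow_zero, Nat.div_one, decide_eq_true_eq] at h0
        rw [Nat.odd_iff]; exact h0
      have hqfib : Fibbinary q := by
        intro i ⟨h1, h2⟩
        rw [hqbit] at h1 h2
        simp only [Bool.and_eq_true, decide_eq_true_eq] at h1 h2
        exact hjmin i (by omega) ⟨h1.2, h2.2⟩
      have hqsize : q.size = s := by
        have hlt : q < 2 ^ s := Nat.mod_lt _ (Nat.two_pow_pos s)
        have hle : q.size ≤ s := Nat.size_le.mpr hlt
        have hjq : q.testBit j = true := by
          rw [hqbit]; simp only [Bool.and_eq_true, decide_eq_true_eq]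
          exact ⟨by omega, hj1⟩
        have h2j : 2 ^ j ≤ q := by
          by_contra h
          push_neg at h
          have : q.size ≤ j := Nat.size_le.mpr h
          have : q < 2 ^ j := h
          rw [Nat.testBit_eq_decide_div_mod_eq, Nat.div_eq_of_lt this] at hjq
          simp at hjq
        have := Nat.lt_size.mpr h2j
        omega
      have htodd : Odd t := by
        have h0 : t.testBit 0 = true := by
          rw [htdef, ← Nat.shiftRight_eq_div_pow, Nat.testBit_shiftRight]
          simpa using hj2
        rw [Nat.testBit_eq_decide_div_mod_eq] at h0
        simp only [pow_zero, Nat.div_one, decide_eq_true_eq] at h0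
        rw [Nat.odd_iff]; exact h0
      obtain ⟨c, hc⟩ := htodd
      refine ⟨c + 1, by omega, r, q, hqodd, hqfib, ?_⟩
      rw [hqsize]
      have : 2 * (c + 1) - 1 = t := by omega
      rw [this, hqdef, htdef, Nat.mod_add_div']
    · rintro ⟨k, hk, r, q, hqodd, hqfib, rfl⟩
      set n := q + (2 * k - 1) * 2 ^ q.size with hn
      obtain ⟨hnodd, hlow, hb1, hb2⟩ := phi_elem_structure hk hqodd hqfib hn
      have hq0 : q ≠ 0 := by rintro rfl; simp [Nat.odd_iff] at hqodd
      have hs : 0 < q.size := Nat.size_pos.mpr (Nat.pos_of_ne_zero hq0)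
      have hn0 : 0 < n := by
        rcases hnodd with ⟨c, hc⟩; omega
      constructor
      · positivity
      · intro hfib
        have hshift : ∀ i, (2 ^ r * n).testBit i =
            if i < r then false else n.testBit (i - r) := by
          intro i
          have := testBit_add_mul_pow (q := 0) n r i (Nat.two_pow_pos r)
          simpa [mul_comm] using this
        apply hfib (r + (q.size - 1))
        constructor
        · rw [hshift, if_neg (by omega), show r + (q.size - 1) - r = q.size - 1 by omega]
          exact hb1
        · rw [hshift, if_neg (by omega), show r + (q.size - 1) + 1 - r = q.size by omega]
          exact hb2
  · -- disjointness
    intro k₁ hk₁ k₂ hk₂ hne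
    rw [Set.disjoint_left]
    rintro m ⟨r₁, q₁, hq₁odd, hq₁fib, hm₁⟩ ⟨r₂, q₂, hq₂odd, hq₂fib, hm₂⟩
    simp only [Set.mem_Ici] at hk₁ hk₂
    set n₁ := q₁ + (2 * k₁ - 1) * 2 ^ q₁.size with hn₁
    set n₂ := q₂ + (2 * k₂ - 1) * 2 ^ q₂.size with hn₂
    obtain ⟨hn₁odd, hlow₁, hb₁1, hb₁2⟩ := phi_elem_structure hk₁ hq₁odd hq₁fib hn₁
    obtain ⟨hn₂odd, hlow₂, hb₂1, hb₂2⟩ := phi_elem_structure hk₂ hq₂odd hq₂fib hn₂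
    have hq₁0 : q₁ ≠ 0 := by rintro rfl; simp [Nat.odd_iff] at hq₁odd
    have hq₂0 : q₂ ≠ 0 := by rintro rfl; simp [Nat.odd_iff] at hq₂odd
    have hs₁ : 0 < q₁.size := Nat.size_pos.mpr (Nat.pos_of_ne_zero hq₁0)
    have hs₂ : 0 < q₂.size := Nat.size_pos.mpr (Nat.pos_of_ne_zero hq₂0)
    -- first, r₁ = r₂ and n₁ = n₂
    have heq : 2 ^ r₁ * n₁ = 2 ^ r₂ * n₂ := by rw [← hm₁, ← hm₂]
    have hrn : n₁ = n₂ := by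
      rcases le_total r₁ r₂ with h | h
      · have : n₁ = 2 ^ (r₂ - r₁) * n₂ := by
          have h2 : 2 ^ r₁ * n₁ = 2 ^ r₁ * (2 ^ (r₂ - r₁) * n₂) := by
            rw [heq, ← mul_assoc, ← pow_add]; congr 2; omega
          exact Nat.eq_of_mul_eq_mul_left (Nat.two_pow_pos _) h2
        have hr : r₂ - r₁ = 0 := by
          by_contra hr0
          have h2d : 2 ∣ n₁ := (dvd_pow_self 2 hr0).trans ⟨n₂, this⟩
          rcases hn₁odd with ⟨c, hc⟩
          rcases h2d with ⟨c', hc'⟩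
          omega
        rw [this, hr, pow_zero, one_mul]
      · have : n₂ = 2 ^ (r₁ - r₂) * n₁ := by
          have h2 : 2 ^ r₂ * n₂ = 2 ^ r₂ * (2 ^ (r₁ - r₂) * n₁) := by
            rw [← heq, ← mul_assoc, ← pow_add]; congr 2; omega
          exact Nat.eq_of_mul_eq_mul_left (Nat.two_pow_pos _) h2
        have hr : r₁ - r₂ = 0 := by
          by_contra hr0
          have h2d : 2 ∣ n₂ := (dvd_pow_self 2 hr0).trans ⟨n₁, this⟩
          rcases hn₂odd with ⟨c, hc⟩
          rcases h2d with ⟨c', hc'⟩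
          omega
        rw [this, hr, pow_zero, one_mul]
    -- sizes agree
    have hsize : q₁.size = q₂.size := by
      by_contra hss
      rcases Nat.lt_or_ge q₁.size q₂.size with h | h
      · exact hlow₂ (q₁.size - 1) (by omega)
          ⟨by rw [← hrn]; exact hb₁1, by rw [show q₁.size - 1 + 1 = q₁.size by omega, ← hrn]; exact hb₁2⟩
      · have h' : q₂.size < q₁.size := by omega
        exact hlow₁ (q₂.size - 1) (by omega)
          ⟨by rw [hrn]; exact hb₂1, by rw [show q₂.size - 1 + 1 = q₂.size by omega, hrn]; exact hb₂2⟩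
    -- q's agree
    have hq₁lt : q₁ < 2 ^ q₁.size := Nat.lt_size_self q₁
    have hq₂lt : q₂ < 2 ^ q₂.size := Nat.lt_size_self q₂
    have hmod₁ : n₁ % 2 ^ q₁.size = q₁ := by
      rw [hn₁, Nat.add_mul_mod_self_right, Nat.mod_eq_of_lt hq₁lt]
    have hmod₂ : n₂ % 2 ^ q₂.size = q₂ := by
      rw [hn₂, Nat.add_mul_mod_self_right, Nat.mod_eq_of_lt hq₂lt]
    have hqeq : q₁ = q₂ := by rw [← hmod₁, ← hmod₂, hrn, hsize]
    have : (2 * k₁ - 1) * 2 ^ q₁.size = (2 * k₂ - 1) * 2 ^ q₂.size := by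
      have := hrn
      rw [hn₁, hn₂, hqeq] at this
      omega
    rw [hsize] at this
    have hk : 2 * k₁ - 1 = 2 * k₂ - 1 :=
      Nat.eq_of_mul_eq_mul_right (Nat.two_pow_pos _) this
    exact hne (by omega)
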